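/- For any predictor distribution Q and true conditional distribution P over a finite label set, if a loss function ℓ satisfies |ℓ(b,y) − ℓ(b*,y)| ≤ M for all y and predictors b, b*, then the expected excess risk E_P[ℓ(b,Y) − ℓ(b*,Y)] is bounded above by M·√(2·KL(P‖Q)) when b minimizes the Q-expected loss and b* minimizes the P-expected loss. -/

import Mathlib

open Finset Real

private lemma g_hasDeriv {t : ℝ} (ht : 0 < t) :
    HasDerivAt (fun t : ℝ => (t+1) * Real.log t - 2*t + 2)
      (Real.log t + t⁻¹ - 1) t := by
  have h1 : HasDerivAt (fun t : ℝ => (t+1) * Real.log t)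
      (1 * Real.log t + (t+1) * t⁻¹) t :=
    ((hasDerivAt_id t).add_const 1).mul (Real.hasDerivAt_log ht.ne')
  have h2 := (h1.sub (((hasDerivAt_id t).const_mul 2))).add_const 2
  exact h2.congr_deriv (by field_simp; ring)

private lemma g_mono : MonotoneOn (fun t : ℝ => (t+1) * Real.log t - 2*t + 2) (Set.Ioi 0) := by
  have hconv : Convex ℝ (Set.Ioi (0:ℝ)) := convex_Ioi 0
  apply monotoneOn_of_deriv_nonneg hconv
  · have h1 : ContinuousOn (fun t : ℝ => (t+1) * Real.log t) (Set.Ioi 0) :=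
      (continuousOn_id.add continuousOn_const).mul
        (Real.continuousOn_log.mono (by intro x hx; simp [Set.mem_Ioi] at hx ⊢; positivity))
    have h2 : ContinuousOn (fun t : ℝ => 2 * t) (Set.Ioi 0) := (continuous_const.mul continuous_id).continuousOn
    exact (h1.sub h2).add continuousOn_const
  · intro t ht
    rw [interior_Ioi] at ht
    exact ((g_hasDeriv ht).differentiableAt).differentiableWithinAt
  · intro t ht
    rw [interior_Ioi] at ht
    rw [(g_hasDeriv ht).deriv]
    have := Real.one_sub_inv_le_log_of_pos ht
    linarith

private lemma g_sign {t : ℝ} (ht : 0 < t) :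
    (1 ≤ t → 0 ≤ (t+1) * Real.log t - 2*t + 2) ∧
    (t ≤ 1 → (t+1) * Real.log t - 2*t + 2 ≤ 0) := by
  have h1 : (1:ℝ) ∈ Set.Ioi (0:ℝ) := by norm_num
  have hg1 : ((1:ℝ)+1) * Real.log 1 - 2*1 + 2 = 0 := by simp
  constructor
  · intro h
    have := g_mono h1 (Set.mem_Ioi.2 ht) h
    simpa [hg1] using this
  · intro h
    have := g_mono (Set.mem_Ioi.2 ht) h1 h
    simpa [hg1] using this

private lemma f_hasDeriv {t : ℝ} (ht : 0 < t) :
    HasDerivAt (fun t : ℝ => (t+2) * (t * Real.log t - t + 1) - (3/2) * (t-1)^2)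
      (2 * ((t+1) * Real.log t - 2*t + 2)) t := by
  have hlog : HasDerivAt (fun t : ℝ => t * Real.log t) (1 * Real.log t + t * t⁻¹) t :=
    (hasDerivAt_id t).mul (Real.hasDerivAt_log ht.ne')
  have hin : HasDerivAt (fun t : ℝ => t * Real.log t - t + 1) (Real.log t) t := by
    have := (hlog.sub (hasDerivAt_id t)).add_const 1
    exact this.congr_deriv (by field_simp; ring)
  have h1 : HasDerivAt (fun t : ℝ => (t+2) * (t * Real.log t - t + 1))
      (1 * (t * Real.log t - t + 1) + (t+2) * Real.log t) t :=
    ((hasDerivAt_id t).add_const 2).mul hin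
  have h2 : HasDerivAt (fun t : ℝ => (3/2:ℝ) * (t-1)^2) ((3/2) * (2*(t-1))) t := by
    have : HasDerivAt (fun t : ℝ => (t-1)^2) (2*(t-1)) t := by
      exact (((hasDerivAt_id t).sub_const 1).pow 2).congr_deriv (by simp)
    exact this.const_mul _
  exact (h1.sub h2).congr_deriv (by ring)

/-- key pointwise inequality: (3/2)(t-1)² ≤ (t+2)(t log t - t + 1) for t > 0 -/
private lemma key_pointwise {t : ℝ} (ht : 0 < t) :
    (3/2) * (t-1)^2 ≤ (t+2) * (t * Real.log t - t + 1) := by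
  set f : ℝ → ℝ := fun t => (t+2) * (t * Real.log t - t + 1) - (3/2) * (t-1)^2 with hf
  have hf1 : f 1 = 0 := by simp [hf]
  have hcont : ContinuousOn f (Set.Ioi 0) := by
    intro x hx
    exact ((f_hasDeriv (Set.mem_Ioi.1 hx)).differentiableAt).continuousAt.continuousWithinAt
  have hfin : 0 ≤ f t := by
    rcases le_total 1 t with h | h
    · -- monotone on Ici 1
      have hmono : MonotoneOn f (Set.Ici 1) := by
        apply monotoneOn_of_deriv_nonneg (convex_Ici 1)
        · exact hcont.mono (fun x hx => Set.mem_Ioi.2 (lt_of_lt_of_le one_pos hx))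
        · intro x hx
          rw [interior_Ici] at hx
          exact ((f_hasDeriv (lt_trans one_pos hx)).differentiableAt).differentiableWithinAt
        · intro x hx
          rw [interior_Ici] at hx
          rw [(f_hasDeriv (lt_trans one_pos hx)).deriv]
          have := (g_sign (lt_trans one_pos hx)).1 hx.le
          linarith
      have := hmono (Set.mem_Ici.2 le_rfl) (Set.mem_Ici.2 h) h
      rw [hf1] at this; exact this
    · -- antitone on Ioc 0 1
      have hanti : AntitoneOn f (Set.Ioc 0 1) := by
        apply antitoneOn_of_deriv_nonpos (convex_Ioc 0 1)
        · exact hcont.mono (fun x hx => hx.1)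
        · intro x hx
          rw [interior_Ioc] at hx
          exact ((f_hasDeriv hx.1).differentiableAt).differentiableWithinAt
        · intro x hx
          rw [interior_Ioc] at hx
          rw [(f_hasDeriv hx.1).deriv]
          have := (g_sign hx.1).2 hx.2.le
          linarith
      have := hanti (Set.mem_Ioc.2 ⟨ht, h⟩) (Set.mem_Ioc.2 ⟨one_pos, le_rfl⟩) h
      rw [hf1] at this; exact this
  simpa [hf] using hfin

/-- pointwise: (3/2)(p-q)²/(p+2q) ≤ p log(p/q) - p + q for p ≥ 0, q > 0 -/
private lemma pq_pointwise {p q : ℝ} (hp : 0 ≤ p) (hq : 0 < q) :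
    (3/2) * (p-q)^2 / (p + 2*q) ≤ p * Real.log (p/q) - p + q := by
  have hpq : 0 < p + 2*q := by linarith
  rw [div_le_iff₀ hpq]
  rcases eq_or_lt_of_le hp with h | hp
  · rw [← h]; simp; nlinarith
  · have ht : 0 < p / q := div_pos hp hq
    have key := key_pointwise ht
    have h2 := mul_le_mul_of_nonneg_left key (le_of_lt (mul_pos hq hq))
    have e1 : q * q * ((3/2) * (p/q-1)^2) = (3/2) * (p-q)^2 := by
      field_simp
    have e2 : q * q * ((p/q+2) * ((p/q) * Real.log (p/q) - p/q + 1)) =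
        (p * Real.log (p/q) - p + q) * (p + 2*q) := by
      field_simp
    rw [e1, e2] at h2
    exact h2

/-- Finite Pinsker: Σ|p-q| ≤ √(2·KL) -/
private lemma pinsker_finite {Y : Type*} [Fintype Y] (P Q : Y → ℝ)
    (hP : ∀ y, 0 ≤ P y) (hQ : ∀ y, 0 < Q y)
    (hPsum : ∑ y, P y = 1) (hQsum : ∑ y, Q y = 1) :
    ∑ y, |P y - Q y| ≤ Real.sqrt (2 * ∑ y, P y * Real.log (P y / Q y)) := by
  set KL := ∑ y, P y * Real.log (P y / Q y) with hKL
  have hpos : ∀ y, 0 < P y + 2 * Q y := fun y => by have := hP y; have := hQ y; linarith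
  -- step 1 : Σ (p-q)²/(p+2q) ≤ (2/3) KL
  have step1 : ∑ y, (P y - Q y)^2 / (P y + 2 * Q y) ≤ (2/3) * KL := by
    have h1 : ∑ y, (3/2) * (P y - Q y)^2 / (P y + 2 * Q y) ≤
        ∑ y, (P y * Real.log (P y / Q y) - P y + Q y) :=
      Finset.sum_le_sum fun y _ => pq_pointwise (hP y) (hQ y)
    have h2 : ∑ y, (P y * Real.log (P y / Q y) - P y + Q y) = KL := by
      rw [hKL]
      rw [Finset.sum_add_distrib, Finset.sum_sub_distrib, hPsum, hQsum]
      ring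
    have h3 : ∑ y, (3/2) * (P y - Q y)^2 / (P y + 2 * Q y) =
        (3/2) * ∑ y, (P y - Q y)^2 / (P y + 2 * Q y) := by
      rw [Finset.mul_sum]; exact Finset.sum_congr rfl fun y _ => by ring
    rw [h2, h3] at h1
    linarith
  -- step 2 : Cauchy-Schwarz
  have cs := Finset.sum_mul_sq_le_sq_mul_sq Finset.univ
    (fun y => Real.sqrt (P y + 2 * Q y))
    (fun y => |P y - Q y| / Real.sqrt (P y + 2 * Q y))
  have hsq : ∀ y : Y, Real.sqrt (P y + 2 * Q y) * (|P y - Q y| / Real.sqrt (P y + 2 * Q y))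
      = |P y - Q y| := fun y => by
    rw [mul_div_cancel₀]
    exact (Real.sqrt_pos.2 (hpos y)).ne'
  have hsq2 : ∀ y : Y, (Real.sqrt (P y + 2 * Q y))^2 = P y + 2 * Q y := fun y =>
    Real.sq_sqrt (hpos y).le
  have hsq3 : ∀ y : Y, (|P y - Q y| / Real.sqrt (P y + 2 * Q y))^2
      = (P y - Q y)^2 / (P y + 2 * Q y) := fun y => by
    rw [div_pow, sq_abs, hsq2]
  simp only [hsq, hsq2, hsq3] at cs
  have hsum3 : ∑ y, (P y + 2 * Q y) = 3 := by
    rw [Finset.sum_add_distrib, hPsum, ← Finset.mul_sum, hQsum]; norm_num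
  rw [hsum3] at cs
  have habs : 0 ≤ ∑ y, |P y - Q y| := Finset.sum_nonneg fun y _ => abs_nonneg _
  have : (∑ y, |P y - Q y|)^2 ≤ 2 * KL := by nlinarith [step1, cs]
  calc ∑ y, |P y - Q y| = Real.sqrt ((∑ y, |P y - Q y|)^2) := (Real.sqrt_sq habs).symm
    _ ≤ Real.sqrt (2 * KL) := Real.sqrt_le_sqrt this

/-- Bounded-loss excess risk bound via Pinsker's inequality (Theorem 3 key step). -/
theorem excess_risk_bounded_loss {Y B : Type*} [Fintype Y] [Nonempty Y]
    (P Q : Y → ℝ) (hP : ∀ y, 0 ≤ P y) (hQ : ∀ y, 0 < Q y)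
    (hPsum : ∑ y, P y = 1) (hQsum : ∑ y, Q y = 1)
    (ℓ : B → Y → ℝ) (M : ℝ) (hM : 0 < M)
    (hbound : ∀ (b b' : B) (y : Y), |ℓ b y - ℓ b' y| ≤ M)
    (b bstar : B)
    (hb : ∀ b' : B, ∑ y, Q y * ℓ b y ≤ ∑ y, Q y * ℓ b' y)
    (hbstar : ∀ b' : B, ∑ y, P y * ℓ bstar y ≤ ∑ y, P y * ℓ b' y) :
    ∑ y, P y * (ℓ b y - ℓ bstar y) ≤
      M * Real.sqrt (2 * ∑ y, P y * Real.log (P y / Q y)) := by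
  have hQf : ∑ y, Q y * (ℓ b y - ℓ bstar y) ≤ 0 := by
    have := hb bstar
    have h : ∑ y, Q y * (ℓ b y - ℓ bstar y)
        = ∑ y, Q y * ℓ b y - ∑ y, Q y * ℓ bstar y := by
      rw [← Finset.sum_sub_distrib]
      exact Finset.sum_congr rfl fun y _ => by ring
    rw [h]; linarith
  have hsplit : ∑ y, P y * (ℓ b y - ℓ bstar y)
      = ∑ y, Q y * (ℓ b y - ℓ bstar y) + ∑ y, (P y - Q y) * (ℓ b y - ℓ bstar y) := by
    rw [← Finset.sum_add_distrib]
    exact Finset.sum_congr rfl fun y _ => by ring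
  have hterm : ∑ y, (P y - Q y) * (ℓ b y - ℓ bstar y) ≤ M * ∑ y, |P y - Q y| := by
    rw [Finset.mul_sum]
    apply Finset.sum_le_sum
    intro y _
    calc (P y - Q y) * (ℓ b y - ℓ bstar y) ≤ |(P y - Q y) * (ℓ b y - ℓ bstar y)| :=
          le_abs_self _
      _ = |P y - Q y| * |ℓ b y - ℓ bstar y| := abs_mul _ _
      _ ≤ |P y - Q y| * M := mul_le_mul_of_nonneg_left (hbound b bstar y) (abs_nonneg _)
      _ = M * |P y - Q y| := mul_comm _ _
  have hpin := pinsker_finite P Q hP hQ hPsum hQsum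
  calc ∑ y, P y * (ℓ b y - ℓ bstar y)
      ≤ 0 + M * ∑ y, |P y - Q y| := by rw [hsplit]; exact add_le_add hQf hterm
    _ = M * ∑ y, |P y - Q y| := by ring
    _ ≤ M * Real.sqrt (2 * ∑ y, P y * Real.log (P y / Q y)) :=
        mul_le_mul_of_nonneg_left hpin hM.le
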